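/- For any positive integer r and distinct exponents a_1,...,a_r, the r×r Vandermonde matrix V (over any commutative ring containing elements x^{a_1},...,x^{a_r}) with V[i][j] = x^{(j-1)a_i} factors as V = L^{(1)} L^{(2)} ... L^{(r-1)} U^{(r-1)} U^{(r-2)} ... U^{(1)}, where U^{(ℓ)} is the identity except that its lower-right (ℓ+1)×(ℓ+1) block is unit upper bidiagonal with superdiagonal entries x^{a_1},...,x^{a_ℓ}, and L^{(ℓ)} is the identity except that its lower-right (ℓ+1)×(ℓ+1) block is lower bidiagonal with diagonal entries 1, x^{a_{r-ℓ+1}}+x^{a_{r-ℓ}}, ..., x^{a_r}+x^{a_{r-ℓ}} and subdiagonal entries all equal to 1. -/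

import Mathlib

/-- The upper bidiagonal factor `U^{(ℓ)}`: the identity except that its lower-right
`(ℓ+1) × (ℓ+1)` block is unit upper bidiagonal with superdiagonal entries
`x^{a 0}, …, x^{a (ℓ-1)}` (i.e. `x^{a_1}, …, x^{a_ℓ}` in 1-based notation). -/
def vandermondeU (R : Type*) [CommRing R] (x : R) (a : ℕ → ℕ) (r ℓ : ℕ) :
    Matrix (Fin r) (Fin r) R :=
  Matrix.of fun i j =>
    if (i : ℕ) = (j : ℕ) then 1
    else if (j : ℕ) = (i : ℕ) + 1 ∧ r - ℓ - 1 ≤ (i : ℕ) then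
      x ^ a ((i : ℕ) - (r - ℓ - 1))
    else 0

/-- The lower bidiagonal factor `L^{(ℓ)}`: the identity except that its lower-right
`(ℓ+1) × (ℓ+1)` block is lower bidiagonal with diagonal entries
`1, x^{a_{r-ℓ+1}}+x^{a_{r-ℓ}}, …, x^{a_r}+x^{a_{r-ℓ}}` (1-based) and all
subdiagonal entries equal to `1`. -/
def vandermondeL (R : Type*) [CommRing R] (x : R) (a : ℕ → ℕ) (r ℓ : ℕ) :
    Matrix (Fin r) (Fin r) R :=
  Matrix.of fun i j =>
    if (i : ℕ) = (j : ℕ) then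
      (if (i : ℕ) ≤ r - ℓ - 1 then 1 else x ^ a (i : ℕ) + x ^ a (r - ℓ - 1))
    else if (j : ℕ) + 1 = (i : ℕ) ∧ r - ℓ - 1 ≤ (j : ℕ) then 1
    else 0

section Aux
variable {R : Type*} [CommRing R]

def hp (x : R) (a : ℕ → ℕ) : ℕ → ℕ → R
  | 0, _ => 1
  | d+1, 0 => x ^ a 0 * hp x a d 0
  | d+1, t+1 => hp x a (d+1) t + x ^ a (t+1) * hp x a d (t+1)

@[simp] lemma hp_zero (x : R) (a : ℕ → ℕ) (t : ℕ) : hp x a 0 t = 1 := by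
  cases t <;> simp [hp]

lemma hp_base (x : R) (a : ℕ → ℕ) (d : ℕ) : hp x a (d+1) 0 = x ^ a 0 * hp x a d 0 := by
  simp [hp]

lemma hp_rec (x : R) (a : ℕ → ℕ) (d t : ℕ) :
    hp x a (d+1) (t+1) = hp x a (d+1) t + x ^ a (t+1) * hp x a d (t+1) := by
  simp [hp]

@[simp] lemma fin_mk_val {r m : ℕ} (h : m < r) : ((⟨m, h⟩ : Fin r) : ℕ) = m := rfl

lemma fin_sum_two {r : ℕ} (f : Fin r → R) (c : Fin r)
    (h0 : ∀ j : Fin r, (j : ℕ) ≠ (c : ℕ) → (j : ℕ) ≠ (c : ℕ) + 1 → f j = 0) :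
    ∑ j, f j = f c + (if h2 : (c : ℕ) + 1 < r then f ⟨(c : ℕ) + 1, h2⟩ else 0) := by
  by_cases h2 : (c : ℕ) + 1 < r
  · rw [dif_pos h2]
    set c' : Fin r := ⟨(c : ℕ) + 1, h2⟩ with hc'
    have hne : c ≠ c' := by
      intro h; apply_fun (Fin.val) at h; simp [hc'] at h
    rw [← Finset.sum_subset (Finset.subset_univ ({c, c'} : Finset (Fin r)))]
    · rw [Finset.sum_pair hne]
    · intro j _ hj
      simp only [Finset.mem_insert, Finset.mem_singleton, not_or] at hj
      exact h0 j (fun h => hj.1 (Fin.ext h)) (fun h => hj.2 (Fin.ext h))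
  · rw [dif_neg h2, add_zero]
    apply Finset.sum_eq_single_of_mem c (Finset.mem_univ c)
    intro j _ hj
    exact h0 j (fun h => hj (Fin.ext h)) (fun h => h2 (h ▸ j.isLt))

/-- the lower-triangular accumulated factor -/
def Gm (x : R) (a : ℕ → ℕ) (r s : ℕ) : Matrix (Fin r) (Fin r) R :=
  Matrix.of fun i j =>
    if (i : ℕ) < s ∨ (j : ℕ) < s then (if (i : ℕ) = (j : ℕ) then 1 else 0)
    else if (j : ℕ) ≤ (i : ℕ) then
      ∏ m ∈ Finset.Ico s (j : ℕ), (x ^ a m + x ^ a (i : ℕ))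
    else 0

/-- the upper-triangular accumulated factor -/
def Hm (x : R) (a : ℕ → ℕ) (r s : ℕ) : Matrix (Fin r) (Fin r) R :=
  Matrix.of fun i j =>
    if (i : ℕ) < s then (if (i : ℕ) = (j : ℕ) then 1 else 0)
    else if (i : ℕ) ≤ (j : ℕ) then hp x a ((j : ℕ) - (i : ℕ)) ((i : ℕ) - s) else 0

variable {r : ℕ} (x : R) (a : ℕ → ℕ)

lemma Gm_apply (s : ℕ) (i j : Fin r) : Gm x a r s i j =
    if (i : ℕ) < s ∨ (j : ℕ) < s then (if (i : ℕ) = (j : ℕ) then 1 else 0)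
    else if (j : ℕ) ≤ (i : ℕ) then
      ∏ m ∈ Finset.Ico s (j : ℕ), (x ^ a m + x ^ a (i : ℕ))
    else 0 := rfl

lemma Hm_apply (s : ℕ) (i j : Fin r) : Hm x a r s i j =
    if (i : ℕ) < s then (if (i : ℕ) = (j : ℕ) then 1 else 0)
    else if (i : ℕ) ≤ (j : ℕ) then hp x a ((j : ℕ) - (i : ℕ)) ((i : ℕ) - s) else 0 := rfl

lemma mul_vL_last (A : Matrix (Fin r) (Fin r) R) (ℓ : ℕ) (i c : Fin r)
    (hc : ¬ (c : ℕ) + 1 < r) :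
    (A * vandermondeL R x a r ℓ) i c
      = A i c * (if (c : ℕ) ≤ r - ℓ - 1 then 1 else x ^ a (c : ℕ) + x ^ a (r - ℓ - 1)) := by
  rw [Matrix.mul_apply,
    fin_sum_two (fun j => A i j * vandermondeL R x a r ℓ j c) c ?_, dif_neg hc, add_zero]
  · show A i c * vandermondeL R x a r ℓ c c = _
    simp only [vandermondeL, Matrix.of_apply]
    rw [if_pos trivial]
  · intro j hj1 hj2
    show A i j * vandermondeL R x a r ℓ j c = 0
    simp only [vandermondeL, Matrix.of_apply]
    rw [if_neg hj1, if_neg (by tauto : ¬ ((c:ℕ) + 1 = (j:ℕ) ∧ r - ℓ - 1 ≤ (c:ℕ))), mul_zero]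

lemma mul_vL (A : Matrix (Fin r) (Fin r) R) (ℓ : ℕ) (i c : Fin r)
    (hc : (c : ℕ) + 1 < r) :
    (A * vandermondeL R x a r ℓ) i c
      = A i c * (if (c : ℕ) ≤ r - ℓ - 1 then 1 else x ^ a (c : ℕ) + x ^ a (r - ℓ - 1))
        + (if r - ℓ - 1 ≤ (c : ℕ) then A i ⟨(c : ℕ) + 1, hc⟩ else 0) := by
  rw [Matrix.mul_apply,
    fin_sum_two (fun j => A i j * vandermondeL R x a r ℓ j c) c ?_, dif_pos hc]
  · congr 1
    · show A i c * vandermondeL R x a r ℓ c c = _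
      simp only [vandermondeL, Matrix.of_apply]
      rw [if_pos trivial]
    · show A i ⟨(c:ℕ)+1, hc⟩ * vandermondeL R x a r ℓ ⟨(c:ℕ)+1, hc⟩ c = _
      simp only [vandermondeL, Matrix.of_apply, fin_mk_val]
      rw [if_neg (by omega : ((c:ℕ)+1 ≠ (c:ℕ)))]
      by_cases h : r - ℓ - 1 ≤ (c : ℕ)
      · rw [if_pos ⟨trivial, h⟩, if_pos h, mul_one]
      · rw [if_neg (by tauto), if_neg h, mul_zero]
  · intro j hj1 hj2
    show A i j * vandermondeL R x a r ℓ j c = 0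
    simp only [vandermondeL, Matrix.of_apply]
    rw [if_neg hj1, if_neg (by tauto : ¬ ((c:ℕ) + 1 = (j:ℕ) ∧ r - ℓ - 1 ≤ (c:ℕ))), mul_zero]

lemma mul_vU_last (B : Matrix (Fin r) (Fin r) R) (ℓ : ℕ) (i j : Fin r)
    (hi : ¬ (i : ℕ) + 1 < r) :
    (vandermondeU R x a r ℓ * B) i j = B i j := by
  rw [Matrix.mul_apply,
    fin_sum_two (fun k => vandermondeU R x a r ℓ i k * B k j) i ?_, dif_neg hi, add_zero]
  · show vandermondeU R x a r ℓ i i * B i j = _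
    simp only [vandermondeU, Matrix.of_apply]
    rw [if_pos trivial, one_mul]
  · intro k hk1 hk2
    show vandermondeU R x a r ℓ i k * B k j = 0
    simp only [vandermondeU, Matrix.of_apply]
    rw [if_neg (fun h => hk1 h.symm),
      if_neg (by tauto : ¬ ((k:ℕ) = (i:ℕ) + 1 ∧ r - ℓ - 1 ≤ (i:ℕ))), zero_mul]

lemma mul_vU (B : Matrix (Fin r) (Fin r) R) (ℓ : ℕ) (i j : Fin r)
    (hi : (i : ℕ) + 1 < r) :
    (vandermondeU R x a r ℓ * B) i j
      = B i j + (if r - ℓ - 1 ≤ (i : ℕ) then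
          x ^ a ((i : ℕ) - (r - ℓ - 1)) * B ⟨(i : ℕ) + 1, hi⟩ j else 0) := by
  rw [Matrix.mul_apply,
    fin_sum_two (fun k => vandermondeU R x a r ℓ i k * B k j) i ?_, dif_pos hi]
  · congr 1
    · show vandermondeU R x a r ℓ i i * B i j = _
      simp only [vandermondeU, Matrix.of_apply]
      rw [if_pos trivial, one_mul]
    · show vandermondeU R x a r ℓ i ⟨(i:ℕ)+1, hi⟩ * B ⟨(i:ℕ)+1, hi⟩ j = _
      simp only [vandermondeU, Matrix.of_apply, fin_mk_val]
      rw [if_neg (by omega : ((i:ℕ) ≠ (i:ℕ)+1))]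
      by_cases h : r - ℓ - 1 ≤ (i : ℕ)
      · rw [if_pos ⟨trivial, h⟩, if_pos h]
      · rw [if_neg (by tauto), if_neg h, zero_mul]
  · intro k hk1 hk2
    show vandermondeU R x a r ℓ i k * B k j = 0
    simp only [vandermondeU, Matrix.of_apply]
    rw [if_neg (fun h => hk1 h.symm),
      if_neg (by tauto : ¬ ((k:ℕ) = (i:ℕ) + 1 ∧ r - ℓ - 1 ≤ (i:ℕ))), zero_mul]


lemma Gm_step (h2 : (2:R) = 0) (s : ℕ) (hs : s + 1 < r) :
    Gm x a r (s + 1) * vandermondeL R x a r (r - 1 - s) = Gm x a r s := by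
  have hrls : r - (r - 1 - s) - 1 = s := by omega
  ext i c
  have hir : (i:ℕ) < r := i.isLt
  have hcr : (c:ℕ) < r := c.isLt
  by_cases hc1 : (c:ℕ) + 1 < r
  · rw [mul_vL x a (Gm x a r (s+1)) (r-1-s) i c hc1, hrls]
    simp only [Gm_apply, fin_mk_val]
    split_ifs
    all_goals try (exfalso; omega)
    all_goals try ring
    all_goals first
      | (rw [show (c:ℕ) = s from by omega]; simp)
      | (simp_rw [show ∀ m, x ^ a (i:ℕ) + x ^ a m = x ^ a m + x ^ a (i:ℕ) from
            fun m => add_comm _ _]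
         rw [Nat.add_comm 1 s, Nat.add_comm 1 (c:ℕ),
          Finset.prod_Ico_succ_top (by omega : s + 1 ≤ (c:ℕ)),
          Finset.prod_eq_prod_Ico_succ_bot (by omega : s < (c:ℕ))]
         linear_combination (x ^ a (c:ℕ) *
           ∏ m ∈ Finset.Ico (s+1) (c:ℕ), (x ^ a m + x ^ a (i:ℕ))) * h2)
      | (rw [show (i:ℕ) = (c:ℕ) from by omega,
          Finset.prod_eq_prod_Ico_succ_bot (by omega : s < (c:ℕ)), Nat.add_comm 1 s]
         ring)
  · rw [mul_vL_last x a (Gm x a r (s+1)) (r-1-s) i c hc1, hrls]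
    simp only [Gm_apply]
    split_ifs
    all_goals try (exfalso; omega)
    all_goals try ring
    all_goals
      rw [show (i:ℕ) = (c:ℕ) from by omega,
        Finset.prod_eq_prod_Ico_succ_bot (by omega : s < (c:ℕ)), Nat.add_comm 1 s]
      ring

lemma Hm_step (s : ℕ) (hs : s + 1 < r) :
    vandermondeU R x a r (r - 1 - s) * Hm x a r (s + 1) = Hm x a r s := by
  have hrls : r - (r - 1 - s) - 1 = s := by omega
  ext i j
  have hir : (i:ℕ) < r := i.isLt
  have hjr : (j:ℕ) < r := j.isLt
  by_cases hi1 : (i:ℕ) + 1 < r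
  · rw [mul_vU x a (Hm x a r (s+1)) (r-1-s) i j hi1, hrls]
    simp only [Hm_apply, fin_mk_val]
    split_ifs
    all_goals try (exfalso; omega)
    all_goals try ring
    all_goals first
    | (rw [show (j:ℕ)-(i:ℕ) = 0 from by omega]; simp)
    | (obtain ⟨d, hd⟩ : ∃ d, (j:ℕ)-(i:ℕ) = d+1 := ⟨(j:ℕ)-(i:ℕ)-1, by omega⟩
       obtain ⟨t, ht⟩ : ∃ t, (i:ℕ)-s = t+1 := ⟨(i:ℕ)-s-1, by omega⟩
       rw [hd, ht, show (j:ℕ)-(1+(i:ℕ)) = d from by omega,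
         show (i:ℕ)-(1+s) = t from by omega,
         show 1+(i:ℕ)-(1+s) = t+1 from by omega, hp_rec]
       try ring)
    | (obtain ⟨d, hd⟩ : ∃ d, (j:ℕ)-(i:ℕ) = d+1 := ⟨(j:ℕ)-(i:ℕ)-1, by omega⟩
       rw [hd, show (i:ℕ)-s = 0 from by omega,
         show 1+(i:ℕ)-(1+s) = 0 from by omega,
         show (j:ℕ)-(1+(i:ℕ)) = d from by omega, hp_base]
       try ring)
  · rw [mul_vU_last x a (Hm x a r (s+1)) (r-1-s) i j hi1]
    simp only [Hm_apply, fin_mk_val]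
    split_ifs
    all_goals try (exfalso; omega)
    all_goals try ring
    all_goals first
    | (rw [show (j:ℕ)-(i:ℕ) = 0 from by omega]; simp)
    | (obtain ⟨d, hd⟩ : ∃ d, (j:ℕ)-(i:ℕ) = d+1 := ⟨(j:ℕ)-(i:ℕ)-1, by omega⟩
       obtain ⟨t, ht⟩ : ∃ t, (i:ℕ)-s = t+1 := ⟨(i:ℕ)-s-1, by omega⟩
       rw [hd, ht, show (j:ℕ)-(1+(i:ℕ)) = d from by omega,
         show (i:ℕ)-(1+s) = t from by omega,
         show 1+(i:ℕ)-(1+s) = t+1 from by omega, hp_rec]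
       try ring)
    | (obtain ⟨d, hd⟩ : ∃ d, (j:ℕ)-(i:ℕ) = d+1 := ⟨(j:ℕ)-(i:ℕ)-1, by omega⟩
       rw [hd, show (i:ℕ)-s = 0 from by omega,
         show 1+(i:ℕ)-(1+s) = 0 from by omega,
         show (j:ℕ)-(1+(i:ℕ)) = d from by omega, hp_base]
       try ring)

lemma Gm_top : Gm x a r (r - 1) = 1 := by
  ext i j
  rw [Gm_apply, Matrix.one_apply]
  by_cases h : (i:ℕ) < r - 1 ∨ (j:ℕ) < r - 1
  · rw [if_pos h]
    simp [Fin.ext_iff]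
  · have hir : (i:ℕ) < r := i.isLt
    have hjr : (j:ℕ) < r := j.isLt
    have hj : (j:ℕ) = r - 1 := by omega
    rw [if_neg h, if_pos (by omega : (j:ℕ) ≤ (i:ℕ)), hj, Finset.Ico_self,
      Finset.prod_empty, if_pos (Fin.ext (by omega))]

lemma Hm_top : Hm x a r (r - 1) = 1 := by
  ext i j
  rw [Hm_apply, Matrix.one_apply]
  have hir : (i:ℕ) < r := i.isLt
  have hjr : (j:ℕ) < r := j.isLt
  by_cases h : (i:ℕ) < r - 1
  · rw [if_pos h]
    simp [Fin.ext_iff]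
  · rw [if_neg h]
    by_cases h2 : (i:ℕ) ≤ (j:ℕ)
    · rw [if_pos h2, show (j:ℕ) - (i:ℕ) = 0 from by omega, hp_zero,
        if_pos (Fin.ext (by omega))]
    · rw [if_neg h2, if_neg (fun hh : i = j => h2 (by rw [hh]))]

lemma newton (h2 : (2:R) = 0) (z : R) (j : ℕ) :
    ∑ k ∈ Finset.range (j+1),
      (∏ m ∈ Finset.range k, (x ^ a m + z)) * hp x a (j - k) k = z ^ j := by
  induction j with
  | zero => simp
  | succ j IH =>
    rw [Finset.sum_range_succ']
    simp only [Nat.succ_sub_succ, Nat.sub_zero, Finset.prod_range_zero, one_mul]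
    have split : ∀ k ∈ Finset.range (j+1),
        (∏ m ∈ Finset.range (k+1), (x ^ a m + z)) * hp x a (j-k) (k+1)
        = (x ^ a k * ((∏ m ∈ Finset.range k, (x ^ a m + z)) * hp x a (j-k) k)
          + z * ((∏ m ∈ Finset.range k, (x ^ a m + z)) * hp x a (j-k) k))
          + (if k < j then (∏ m ∈ Finset.range (k+1), (x ^ a m + z))
              * (x ^ a (k+1) * hp x a (j-(k+1)) (k+1)) else 0) := by
      intro k hk
      by_cases hkj : k < j
      · obtain ⟨d, hd⟩ : ∃ d, j - k = d + 1 := ⟨j - k - 1, by omega⟩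
        have hd2 : j - (k+1) = d := by omega
        rw [if_pos hkj, hd, hd2, hp_rec, Finset.prod_range_succ]
        ring
      · have hkj' : k = j := by simp at hk; omega
        subst hkj'
        rw [if_neg hkj, Nat.sub_self, hp_zero, hp_zero, Finset.prod_range_succ]
        ring
    rw [Finset.sum_congr rfl split, Finset.sum_add_distrib, Finset.sum_add_distrib]
    have hSz : ∑ k ∈ Finset.range (j+1),
        z * ((∏ m ∈ Finset.range k, (x ^ a m + z)) * hp x a (j-k) k) = z ^ (j+1) := by
      rw [← Finset.mul_sum, IH]; ring
    have hSif : ∑ k ∈ Finset.range (j+1),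
        (if k < j then (∏ m ∈ Finset.range (k+1), (x ^ a m + z))
            * (x ^ a (k+1) * hp x a (j-(k+1)) (k+1)) else 0)
        = ∑ k ∈ Finset.range j, (∏ m ∈ Finset.range (k+1), (x ^ a m + z))
            * (x ^ a (k+1) * hp x a (j-(k+1)) (k+1)) := by
      rw [Finset.sum_range_succ, if_neg (lt_irrefl j), add_zero]
      exact Finset.sum_congr rfl fun k hk => if_pos (Finset.mem_range.mp hk)
    have hA : ∑ k ∈ Finset.range (j+1),
        x ^ a k * ((∏ m ∈ Finset.range k, (x ^ a m + z)) * hp x a (j-k) k)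
        = ∑ k ∈ Finset.range j, (∏ m ∈ Finset.range (k+1), (x ^ a m + z))
            * (x ^ a (k+1) * hp x a (j-(k+1)) (k+1)) + x ^ a 0 * hp x a j 0 := by
      rw [Finset.sum_range_succ']
      simp only [Finset.prod_range_zero, Nat.sub_zero, one_mul]
      congr 1
      exact Finset.sum_congr rfl fun k hk => by ring
    rw [hSz, hSif, hA, hp_base]
    linear_combination (∑ k ∈ Finset.range j, (∏ m ∈ Finset.range (k+1), (x ^ a m + z))
            * (x ^ a (k+1) * hp x a (j-(k+1)) (k+1)) + x ^ a 0 * hp x a j 0) * h2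

lemma GH (h2 : (2:R) = 0) :
    Gm x a r 0 * Hm x a r 0
      = Matrix.of (fun i j : Fin r => x ^ ((j:ℕ) * a (i:ℕ))) := by
  ext i j
  rw [Matrix.mul_apply, Matrix.of_apply]
  have key : ∀ k : Fin r, Gm x a r 0 i k * Hm x a r 0 k j
      = (if (k:ℕ) ≤ (i:ℕ) then
          ∏ m ∈ Finset.range (k:ℕ), (x ^ a m + x ^ a (i:ℕ)) else 0)
        * (if (k:ℕ) ≤ (j:ℕ) then hp x a ((j:ℕ) - (k:ℕ)) (k:ℕ) else 0) := by
    intro k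
    rw [Gm_apply, Hm_apply, if_neg (by omega), if_neg (by omega : ¬ (k:ℕ) < 0)]
    simp only [← Finset.range_eq_Ico, Nat.sub_zero]
  rw [Finset.sum_congr rfl (fun k _ => key k),
    Fin.sum_univ_eq_sum_range (fun k => (if k ≤ (i:ℕ) then
        ∏ m ∈ Finset.range k, (x ^ a m + x ^ a (i:ℕ)) else 0)
      * (if k ≤ (j:ℕ) then hp x a ((j:ℕ) - k) k else 0)),
    ← Finset.sum_subset (Finset.range_subset_range.mpr (show (j:ℕ)+1 ≤ r from j.isLt))
      (fun k _ hk => by rw [if_neg (by simp at hk ⊢; omega : ¬ k ≤ (j:ℕ)), mul_zero])]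
  have key2 : ∀ k ∈ Finset.range ((j:ℕ)+1),
      (if k ≤ (i:ℕ) then ∏ m ∈ Finset.range k, (x ^ a m + x ^ a (i:ℕ)) else 0)
        * (if k ≤ (j:ℕ) then hp x a ((j:ℕ) - k) k else 0)
      = (∏ m ∈ Finset.range k, (x ^ a m + x ^ a (i:ℕ))) * hp x a ((j:ℕ) - k) k := by
    intro k hk
    rw [if_pos (by simp at hk; omega : k ≤ (j:ℕ))]
    by_cases hki : k ≤ (i:ℕ)
    · rw [if_pos hki]
    · rw [if_neg hki]
      have hz : (∏ m ∈ Finset.range k, (x ^ a m + x ^ a (i:ℕ))) = 0 := by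
        apply Finset.prod_eq_zero (Finset.mem_range.mpr (by omega : (i:ℕ) < k))
        linear_combination (x ^ a (i:ℕ)) * h2
      rw [hz, zero_mul]
  rw [Finset.sum_congr rfl key2, newton x a h2 (x ^ a (i:ℕ)) (j:ℕ), mul_comm ((j:ℕ)),
    pow_mul]

lemma Lprod (h2 : (2:R) = 0) : ∀ k, k ≤ r - 1 →
    ((List.range k).map (fun t => vandermondeL R x a r (t + 1))).prod
      = Gm x a r (r - 1 - k) := by
  intro k
  induction k with
  | zero => intro _; simpa using (Gm_top x a).symm
  | succ k IH =>
    intro hk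
    rw [List.range_succ, List.map_append, List.prod_append, IH (by omega)]
    simp only [List.map_cons, List.map_nil, List.prod_cons, List.prod_nil, mul_one]
    have hstep := Gm_step (r := r) x a h2 (r - 1 - (k+1)) (by omega)
    rw [show (r - 1 - (k+1)) + 1 = r - 1 - k from by omega,
      show r - 1 - (r - 1 - (k+1)) = k + 1 from by omega] at hstep
    exact hstep

lemma Uprod : ∀ k, k ≤ r - 1 →
    (((List.range k).reverse).map (fun t => vandermondeU R x a r (t + 1))).prod
      = Hm x a r (r - 1 - k) := by
  intro k
  induction k with
  | zero => intro _; simpa using (Hm_top x a).symm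
  | succ k IH =>
    intro hk
    rw [List.range_succ, List.reverse_append, List.reverse_singleton,
      List.singleton_append, List.map_cons, List.prod_cons, IH (by omega)]
    have hstep := Hm_step (r := r) x a (r - 1 - (k+1)) (by omega)
    rw [show (r - 1 - (k+1)) + 1 = r - 1 - k from by omega,
      show r - 1 - (r - 1 - (k+1)) = k + 1 from by omega] at hstep
    exact hstep

end Aux

theorem vandermonde_LU_factorization (R : Type*) [CommRing R] [CharP R 2]
    (r : ℕ) (hr : 0 < r) (x : R) (a : ℕ → ℕ)
    (ha : ∀ i j : ℕ, i < r → j < r → a i = a j → i = j) :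
    (Matrix.of fun i j : Fin r => x ^ ((j : ℕ) * a (i : ℕ)))
      = ((List.range (r - 1)).map (fun t => vandermondeL R x a r (t + 1))).prod *
        (((List.range (r - 1)).reverse).map (fun t => vandermondeU R x a r (t + 1))).prod := by
  have h2 : (2 : R) = 0 := by exact_mod_cast CharP.cast_eq_zero R 2
  rw [Lprod x a h2 (r-1) le_rfl, Uprod x a (r-1) le_rfl, Nat.sub_self,
    GH x a h2]
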